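/- In a finite 2-dimensional weighted directed graph, there exists a reachable multicycle 𝒞 (a finite multiset of simple cycles all lying in one strongly connected component reachable from the start vertex) with w₁(𝒞) ≥ 0 and w₂(𝒞) ≥ 0 if and only if either (1) one simple reachable cycle C satisfies w(C) ≥ (0,0), or (2) there exist two simple cycles C, C' in the same reachable strongly connected component with w(C) = (-x, y), w(C') = (x', -y'), where x, x', y are positive integers, y' a positive integer, and x'·y - x·y' ≥ 0. -/

import Mathlib

set_option maxHeartbeats 1000000 in
private lemma gmc_sum_neg_of_all_neg {m : ℕ} (hm : 1 ≤ m) (f : Fin m → ℤ)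
    (h : ∀ i, f i < 0) : ∑ i, f i < 0 := by
  have : ∑ i, f i < ∑ _i : Fin m, (0:ℤ) :=
    Finset.sum_lt_sum_of_nonempty ⟨⟨0, hm⟩, Finset.mem_univ _⟩ (fun i _ => h i)
  simpa using this

set_option maxHeartbeats 1000000 in
private lemma gmc_all_zero {m : ℕ} (f : Fin m → ℤ)
    (h : ∀ i, f i ≤ 0) (hs : 0 ≤ ∑ i, f i) : ∀ i, f i = 0 := by
  intro i
  by_contra hi
  have : ∑ j, f j < ∑ _j : Fin m, (0:ℤ) :=
    Finset.sum_lt_sum (fun j _ => h j) ⟨i, Finset.mem_univ i, lt_of_le_of_ne (h i) hi⟩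
  simp at this; omega

set_option maxHeartbeats 1000000 in
private lemma gmc_key {m : ℕ} (hm : 1 ≤ m) (a b : Fin m → ℤ)
    (h : ∀ i, a i < 0 ∨ b i < 0)
    (ha : 0 ≤ ∑ i, a i) (hb : 0 ≤ ∑ i, b i) :
    ∃ i j, a i < 0 ∧ 0 < b i ∧ 0 < a j ∧ b j < 0 ∧ 0 ≤ a j * b i - a i * b j := by
  classical
  have hA : ∃ i, a i < 0 ∧ 0 < b i := by
    by_contra hA
    push_neg at hA
    have hball : ∀ i, b i ≤ 0 := fun i => (h i).elim (hA i) le_of_lt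
    have hzb := gmc_all_zero b hball hb
    have hall : ∀ i, a i < 0 := fun i => (h i).resolve_right (by simp [hzb i])
    have := gmc_sum_neg_of_all_neg hm a hall
    omega
  have hB : ∃ j, 0 < a j ∧ b j < 0 := by
    by_contra hB
    push_neg at hB
    have haall : ∀ i, a i ≤ 0 := by
      intro i
      rcases h i with h' | h'
      · exact le_of_lt h'
      · by_contra hc; push_neg at hc; exact absurd h' (not_lt.2 (hB i hc))
    have hza := gmc_all_zero a haall ha
    have hall : ∀ i, b i < 0 := fun i => (h i).resolve_left (by simp [hza i])
    have := gmc_sum_neg_of_all_neg hm b hall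
    omega
  set A : Finset (Fin m) := Finset.univ.filter (fun i => a i < 0 ∧ 0 < b i) with hAdef
  set B : Finset (Fin m) := Finset.univ.filter (fun j => 0 < a j ∧ b j < 0) with hBdef
  have hAne : A.Nonempty := by
    obtain ⟨i, hi⟩ := hA; exact ⟨i, by simp [hAdef, hi.1, hi.2]⟩
  have hBne : B.Nonempty := by
    obtain ⟨j, hj⟩ := hB; exact ⟨j, by simp [hBdef, hj.1, hj.2]⟩
  obtain ⟨i0, hi0A, hi0max⟩ := A.exists_max_image (fun i => (b i : ℚ) / (-(a i : ℚ))) hAne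
  obtain ⟨j0, hj0B, hj0max⟩ := B.exists_max_image (fun j => (a j : ℚ) / (-(b j : ℚ))) hBne
  simp only [hAdef, Finset.mem_filter, Finset.mem_univ, true_and] at hi0A
  simp only [hBdef, Finset.mem_filter, Finset.mem_univ, true_and] at hj0B
  obtain ⟨hai0, hbi0⟩ := hi0A
  obtain ⟨haj0, hbj0⟩ := hj0B
  refine ⟨i0, j0, hai0, hbi0, haj0, hbj0, ?_⟩
  by_contra hdet
  push_neg at hdet
  set x : ℤ := -a i0 with hx
  set y : ℤ := b i0 with hy
  set x' : ℤ := a j0 with hx'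
  set y' : ℤ := -b j0 with hy'
  have hxpos : 0 < x := by omega
  have hypos : 0 < y := hbi0
  have hx'pos : 0 < x' := haj0
  have hy'pos : 0 < y' := by omega
  have hcross : x' * y < x * y' := by
    have : a j0 * b i0 - a i0 * b j0 < 0 := hdet
    nlinarith [this]
  set α : ℤ := y * x' + x * y' with hα
  set β : ℤ := 2 * x * x' with hβ
  have hαpos : 0 < α := by positivity
  have hβpos : 0 < β := by positivity
  have hmaxA : ∀ i, a i < 0 → 0 < b i → x * b i ≤ y * (-a i) := by
    intro i hai hbi
    have hiA : i ∈ A := by simp [hAdef, hai, hbi]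
    have := hi0max i hiA
    rw [div_le_div_iff₀ (by exact_mod_cast (show (0:ℤ) < -(a i) by omega))
      (by exact_mod_cast (show (0:ℤ) < -(a i0) by omega))] at this
    have h2 : (b i : ℚ) * (-(a i0:ℚ)) ≤ (b i0 : ℚ) * (-(a i : ℚ)) := this
    have h3 : b i * (-a i0) ≤ b i0 * (-a i) := by exact_mod_cast h2
    nlinarith [h3]
  have hmaxB : ∀ j, 0 < a j → b j < 0 → y' * a j ≤ x' * (-b j) := by
    intro j haj hbj
    have hjB : j ∈ B := by simp [hBdef, haj, hbj]
    have := hj0max j hjB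
    rw [div_le_div_iff₀ (by exact_mod_cast (show (0:ℤ) < -(b j) by omega))
      (by exact_mod_cast (show (0:ℤ) < -(b j0) by omega))] at this
    have h2 : (a j : ℚ) * (-(b j0:ℚ)) ≤ (a j0 : ℚ) * (-(b j : ℚ)) := this
    have h3 : a j * (-b j0) ≤ a j0 * (-b j) := by exact_mod_cast h2
    nlinarith [h3]
  have hneg : ∀ i, α * a i + β * b i < 0 := by
    intro i
    by_cases hiA : a i < 0 ∧ 0 < b i
    · obtain ⟨h1, h2⟩ := hiA
      have h3 := hmaxA i h1 h2
      nlinarith [h3, hcross]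
    · by_cases hiB : 0 < a i ∧ b i < 0
      · obtain ⟨h1, h2⟩ := hiB
        have h3 := hmaxB i h1 h2
        nlinarith [h3, hcross]
      · push_neg at hiA hiB
        rcases h i with h' | h'
        · have hb' : b i ≤ 0 := hiA h'
          nlinarith [h', hb']
        · have ha' : a i ≤ 0 := by
            by_contra hc; push_neg at hc; exact absurd h' (not_lt.2 (hiB hc))
          nlinarith [h', ha']
  have hsum : ∑ i, (α * a i + β * b i) < 0 := gmc_sum_neg_of_all_neg hm _ hneg
  rw [Finset.sum_add_distrib, ← Finset.mul_sum, ← Finset.mul_sum] at hsum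
  nlinarith [hsum, ha, hb, hαpos, hβpos]

set_option maxHeartbeats 1000000 in
private lemma gmc_two_block_sum (p q : ℕ) (S S' : ℤ) :
    ∑ i : Fin (p+q), (if (i:ℕ) < p then S else S') = p * S + q * S' := by
  rw [Fin.sum_univ_eq_sum_range (fun j => if j < p then S else S')]
  rw [Finset.sum_range_add]
  have h1 : ∑ j ∈ Finset.range p, (if j < p then S else S') = p * S := by
    rw [Finset.sum_congr rfl (fun j hj => if_pos (Finset.mem_range.1 hj))]
    simp [mul_comm]
  have h2 : ∑ j ∈ Finset.range q, (if p + j < p then S else S') = q * S' := by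
    rw [Finset.sum_congr rfl (fun j _ => if_neg (by omega))]
    simp [mul_comm]
  rw [h1, h2]

set_option maxHeartbeats 1000000 in


/-- Characterization of the existence of a reachable good multicycle: a finite
2-dimensionally weighted directed graph has a nonempty finite family of simple
cycles, all lying in one strongly connected component reachable from `v₀`, with
total weight `≥ (0,0)`, iff either (1) a single reachable simple cycle has weight
`≥ (0,0)`, or (2) there are two simple cycles `C, C'` in the same reachable
strongly connected component with `w(C) = (-x, y)`, `w(C') = (x', -y')`,
`x, x', y, y' ≥ 1`, and `x'·y - x·y' ≥ 0`. -/
theorem good_multicycle_characterization {V : Type*} [Fintype V]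
    (E : V → V → Prop) (w₁ w₂ : V → V → ℤ) (v₀ : V) :
    (∃ (m : ℕ) (n : Fin m → ℕ) (c : Fin m → ℕ → V), 1 ≤ m ∧
        (∀ i, 1 ≤ n i) ∧
        (∀ i, c i (n i) = c i 0) ∧
        (∀ i, ∀ j < n i, E (c i j) (c i (j + 1))) ∧
        (∀ i, ∀ j < n i, ∀ j' < n i, c i j = c i j' → j = j') ∧
        (∀ i, Relation.ReflTransGen E v₀ (c i 0)) ∧
        (∀ i i', Relation.ReflTransGen E (c i 0) (c i' 0)) ∧
        0 ≤ ∑ i, ∑ j ∈ Finset.range (n i), w₁ (c i j) (c i (j + 1)) ∧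
        0 ≤ ∑ i, ∑ j ∈ Finset.range (n i), w₂ (c i j) (c i (j + 1)))
    ↔
    ((∃ (n : ℕ) (c : ℕ → V), 1 ≤ n ∧ c n = c 0 ∧
        (∀ i < n, E (c i) (c (i + 1))) ∧
        (∀ i < n, ∀ j < n, c i = c j → i = j) ∧
        Relation.ReflTransGen E v₀ (c 0) ∧
        0 ≤ ∑ i ∈ Finset.range n, w₁ (c i) (c (i + 1)) ∧
        0 ≤ ∑ i ∈ Finset.range n, w₂ (c i) (c (i + 1)))
      ∨
      (∃ (n n' : ℕ) (c c' : ℕ → V) (x x' y y' : ℤ),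
        1 ≤ n ∧ c n = c 0 ∧ (∀ i < n, E (c i) (c (i + 1))) ∧
        (∀ i < n, ∀ j < n, c i = c j → i = j) ∧
        1 ≤ n' ∧ c' n' = c' 0 ∧ (∀ i < n', E (c' i) (c' (i + 1))) ∧
        (∀ i < n', ∀ j < n', c' i = c' j → i = j) ∧
        Relation.ReflTransGen E v₀ (c 0) ∧
        Relation.ReflTransGen E (c 0) (c' 0) ∧
        Relation.ReflTransGen E (c' 0) (c 0) ∧
        1 ≤ x ∧ 1 ≤ x' ∧ 1 ≤ y ∧ 1 ≤ y' ∧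
        (∑ i ∈ Finset.range n, w₁ (c i) (c (i + 1))) = -x ∧
        (∑ i ∈ Finset.range n, w₂ (c i) (c (i + 1))) = y ∧
        (∑ i ∈ Finset.range n', w₁ (c' i) (c' (i + 1))) = x' ∧
        (∑ i ∈ Finset.range n', w₂ (c' i) (c' (i + 1))) = -y' ∧
        0 ≤ x' * y - x * y')) := by
  classical
  constructor
  · rintro ⟨m, n, c, hm, hn1, hcyc, hE, hinj, hreach, hscc, hw1, hw2⟩
    by_cases hone : ∃ i, (0 ≤ ∑ j ∈ Finset.range (n i), w₁ (c i j) (c i (j+1))) ∧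
        (0 ≤ ∑ j ∈ Finset.range (n i), w₂ (c i j) (c i (j+1)))
    · obtain ⟨i, h1, h2⟩ := hone
      exact Or.inl ⟨n i, c i, hn1 i, hcyc i, hE i, hinj i, hreach i, h1, h2⟩
    · push_neg at hone
      have hor : ∀ i, (∑ j ∈ Finset.range (n i), w₁ (c i j) (c i (j+1))) < 0 ∨
          (∑ j ∈ Finset.range (n i), w₂ (c i j) (c i (j+1))) < 0 := by
        intro i
        rcases lt_or_ge (∑ j ∈ Finset.range (n i), w₁ (c i j) (c i (j+1))) 0 with h' | h'
        · exact Or.inl h'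
        · exact Or.inr (hone i h')
      obtain ⟨i, j, hai, hbi, haj, hbj, hd⟩ := gmc_key hm _ _ hor hw1 hw2
      refine Or.inr ⟨n i, n j, c i, c j,
        -(∑ k ∈ Finset.range (n i), w₁ (c i k) (c i (k+1))),
        (∑ k ∈ Finset.range (n j), w₁ (c j k) (c j (k+1))),
        (∑ k ∈ Finset.range (n i), w₂ (c i k) (c i (k+1))),
        -(∑ k ∈ Finset.range (n j), w₂ (c j k) (c j (k+1))),
        hn1 i, hcyc i, hE i, hinj i, hn1 j, hcyc j, hE j, hinj j,
        hreach i, hscc i j, hscc j i,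
        by omega, haj, hbi, by omega,
        (neg_neg _).symm, rfl, rfl, (neg_neg _).symm, by nlinarith [hd]⟩
  · rintro (⟨n, c, hn, hcyc, hE, hinj, hr, h1, h2⟩ | hyp)
    · exact ⟨1, fun _ => n, fun _ => c, le_refl 1, fun _ => hn, fun _ => hcyc,
        fun _ => hE, fun _ => hinj, fun _ => hr,
        fun _ _ => Relation.ReflTransGen.refl, by simpa, by simpa⟩
    · obtain ⟨n, n', c, c', x, x', y, y', hn, hcyc, hE, hinj, hn', hcyc', hE', hinj',
        hr0, hr1, hr2, hx, hx', hy, hy', hs1, hs2, hs1', hs2', hdet⟩ := hyp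
      set p : ℕ := x'.toNat with hp
      set q : ℕ := x.toNat with hq
      have hpz : (p : ℤ) = x' := Int.toNat_of_nonneg (by omega)
      have hqz : (q : ℤ) = x := Int.toNat_of_nonneg (by omega)
      have hp1 : 1 ≤ p := by omega
      refine ⟨p + q, fun i => if (i:ℕ) < p then n else n',
        fun i => if (i:ℕ) < p then c else c', by omega, ?_, ?_, ?_, ?_, ?_, ?_, ?_, ?_⟩
      · intro i; by_cases hi : (i:ℕ) < p <;> simp [hi, hn, hn']
      · intro i; by_cases hi : (i:ℕ) < p <;> simp [hi, hcyc, hcyc']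
      · intro i j hj
        by_cases hi : (i:ℕ) < p
        · simp only [if_pos hi] at hj ⊢; exact hE j hj
        · simp only [if_neg hi] at hj ⊢; exact hE' j hj
      · intro i j hj j' hj' hcc
        by_cases hi : (i:ℕ) < p
        · simp only [if_pos hi] at hj hj' hcc; exact hinj j hj j' hj' hcc
        · simp only [if_neg hi] at hj hj' hcc; exact hinj' j hj j' hj' hcc
      · intro i
        by_cases hi : (i:ℕ) < p
        · simp only [if_pos hi]; exact hr0
        · simp only [if_neg hi]; exact hr0.trans hr1
      · intro i i'
        by_cases hi : (i:ℕ) < p <;> by_cases hi' : (i':ℕ) < p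
        · simp only [if_pos hi, if_pos hi']; exact Relation.ReflTransGen.refl
        · simp only [if_pos hi, if_neg hi']; exact hr1
        · simp only [if_neg hi, if_pos hi']; exact hr2
        · simp only [if_neg hi, if_neg hi']; exact Relation.ReflTransGen.refl
      · have := gmc_two_block_sum p q (∑ i ∈ Finset.range n, w₁ (c i) (c (i + 1)))
          (∑ i ∈ Finset.range n', w₁ (c' i) (c' (i + 1)))
        have heq : ∑ i : Fin (p+q),
            ∑ j ∈ Finset.range (if (i:ℕ) < p then n else n'),
              w₁ ((if (i:ℕ) < p then c else c') j) ((if (i:ℕ) < p then c else c') (j + 1))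
            = ∑ i : Fin (p+q), (if (i:ℕ) < p
                then (∑ i ∈ Finset.range n, w₁ (c i) (c (i + 1)))
                else (∑ i ∈ Finset.range n', w₁ (c' i) (c' (i + 1)))) := by
          refine Finset.sum_congr rfl fun i _ => ?_
          by_cases hi : (i:ℕ) < p <;> simp [hi]
        rw [heq, this, hs1, hs1']
        nlinarith [hpz, hqz]
      · have := gmc_two_block_sum p q (∑ i ∈ Finset.range n, w₂ (c i) (c (i + 1)))
          (∑ i ∈ Finset.range n', w₂ (c' i) (c' (i + 1)))
        have heq : ∑ i : Fin (p+q),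
            ∑ j ∈ Finset.range (if (i:ℕ) < p then n else n'),
              w₂ ((if (i:ℕ) < p then c else c') j) ((if (i:ℕ) < p then c else c') (j + 1))
            = ∑ i : Fin (p+q), (if (i:ℕ) < p
                then (∑ i ∈ Finset.range n, w₂ (c i) (c (i + 1)))
                else (∑ i ∈ Finset.range n', w₂ (c' i) (c' (i + 1)))) := by
          refine Finset.sum_congr rfl fun i _ => ?_
          by_cases hi : (i:ℕ) < p <;> simp [hi]
        rw [heq, this, hs2, hs2']
        nlinarith [hpz, hqz]
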